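/- Let f : ℤ_p³ → C and g : ℤ_p² → C be continuous functions satisfying, for all x, y, z, w ∈ ℤ_p: (i) f(x+y,z,w) − f(y,z,w) − f(x,y+z,w) + f(x,y,z+w) − f(x,y,z) = 0; (ii) g(x+y,z) − g(y,z) − g(x,z) − f(x,y,z) + f(x,z,y) − f(z,x,y) = 0; (iii) g(x,y+z) − g(x,y) − g(x,z) + f(x,y,z) − f(y,x,z) + f(y,z,x) = 0; (iv) g(x,y) + g(y,x) = 0; (v) g(x,x) = 0. Then there exists a continuous function h : ℤ_p² → C such that f(x,y,z) = h(x+y,z) − h(y,z) − h(x,y+z) + h(x,y) and g(x,y) = h(x,y) − h(y,x) for all x, y, z ∈ ℤ_p. -/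

import Mathlib

open Finset Filter

namespace ThreeCocycleAux

variable {p : ℕ} [hp : Fact p.Prime]

lemma nat_eq_of_norm_le {a b j : ℕ} (ha : a < p ^ j) (hb : b < p ^ j)
    (h : ‖((a : ℤ_[p]) - b)‖ ≤ (p : ℝ) ^ (-(j : ℤ))) : a = b := by
  have h' : ‖(((a : ℤ) - b : ℤ) : ℤ_[p])‖ ≤ (p : ℝ) ^ (-(j : ℤ)) := by push_cast; exact h
  have hdvd : ((p : ℤ) ^ j) ∣ ((a : ℤ) - b) := PadicInt.norm_int_le_pow_iff_dvd.mp h'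
  have habs : |(a : ℤ) - b| < (p : ℤ) ^ j := by
    have hpj : ((p:ℤ)^j) = ((p^j : ℕ) : ℤ) := by push_cast; ring
    rw [abs_sub_lt_iff, hpj]
    omega
  have := Int.eq_zero_of_abs_lt_dvd hdvd habs
  omega

lemma norm_sub_appr_le (x : ℤ_[p]) (j : ℕ) : ‖x - x.appr j‖ ≤ (p : ℝ) ^ (-(j : ℤ)) :=
  (PadicInt.norm_le_pow_iff_mem_span_pow _ j).mpr (PadicInt.appr_spec j x)

lemma appr_eq_of_norm_le {x x' : ℤ_[p]} {j : ℕ} (h : ‖x - x'‖ ≤ (p : ℝ) ^ (-(j : ℤ))) :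
    x.appr j = x'.appr j := by
  refine nat_eq_of_norm_le (PadicInt.appr_lt x j) (PadicInt.appr_lt x' j) ?_
  have e : ((x.appr j : ℤ_[p]) - x'.appr j) = -(x - x.appr j) + ((x - x') + (x' - x'.appr j)) := by
    ring
  rw [e]
  refine (PadicInt.nonarchimedean _ _).trans (max_le ?_ ?_)
  · rw [norm_neg]; exact norm_sub_appr_le x j
  · exact (PadicInt.nonarchimedean _ _).trans (max_le h (norm_sub_appr_le x' j))

lemma appr_natCast {n j : ℕ} (h : n < p ^ j) : ((n : ℤ_[p]).appr j) = n := by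
  refine nat_eq_of_norm_le (PadicInt.appr_lt _ j) h ?_
  have := norm_sub_appr_le (n : ℤ_[p]) j
  rwa [← norm_neg, neg_sub] at this

lemma sum_range_mod {C : Type*} [AddCommMonoid C] (G : ℕ → C) (q t : ℕ) :
    ∑ i ∈ range (t * q), G (i % q) = t • ∑ s ∈ range q, G s := by
  induction t with
  | zero => simp
  | succ t ih =>
      rw [succ_nsmul, ← ih, add_mul, one_mul, Finset.sum_range_add]
      congr 1
      refine Finset.sum_congr rfl fun i hi => ?_
      rw [Finset.mem_range] at hi
      rw [add_comm, Nat.add_mul_mod_self_right, Nat.mod_eq_of_lt hi]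

variable {C : Type*} [NormedField C] [CompleteSpace C] [IsUltrametricDist C]

lemma exists_primitive (hpC : ‖(p : C)‖ ≤ (p : ℝ)⁻¹)
    (F : ℤ_[p] × ℤ_[p] → C) (hF : Continuous F) :
    ∃ T : ℤ_[p] × ℤ_[p] → C, Continuous T ∧
      ∀ (n : ℕ) (y : ℤ_[p]), T ((n : ℤ_[p]), y) = ∑ i ∈ range n, F ((i : ℤ_[p]), y) := by
  set S : ℕ → ℤ_[p] → C := fun n y => ∑ i ∈ range n, F ((i : ℤ_[p]), y) with hS
  have hp1 : (1 : ℝ) < (p : ℝ) := by exact_mod_cast hp.out.one_lt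
  have hp0 : (0 : ℝ) < (p : ℝ) := lt_trans one_pos hp1
  -- boundedness
  obtain ⟨M, hM⟩ : ∃ M, ∀ q : ℤ_[p] × ℤ_[p], ‖F q‖ ≤ M := by
    obtain ⟨M, hM⟩ := isCompact_univ.exists_bound_of_continuousOn hF.continuousOn
    exact ⟨M, fun q => hM q trivial⟩
  have hM0 : 0 ≤ M := le_trans (norm_nonneg _) (hM (0, 0))
  -- uniform continuity
  have hB : ∀ ε : ℝ, 0 < ε → ∃ m : ℕ, ∀ t t' y y' : ℤ_[p],
      ‖t - t'‖ ≤ (p : ℝ) ^ (-(m : ℤ)) → ‖y - y'‖ ≤ (p : ℝ) ^ (-(m : ℤ)) →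
      ‖F (t, y) - F (t', y')‖ ≤ ε := by
    intro ε hε
    have hUC : UniformContinuous F := CompactSpace.uniformContinuous_of_continuous hF
    obtain ⟨δ, hδ0, hδ⟩ := Metric.uniformContinuous_iff.mp hUC ε hε
    obtain ⟨m, hm⟩ := pow_unbounded_of_one_lt δ⁻¹ hp1
    refine ⟨m, fun t t' y y' h1 h2 => ?_⟩
    have hlt : (p : ℝ) ^ (-(m : ℤ)) < δ := by
      rw [zpow_neg, zpow_natCast]
      rw [inv_lt_comm₀ (pow_pos hp0 m) hδ0] at *
      exact hm
    have : dist ((t, y) : ℤ_[p] × ℤ_[p]) (t', y') < δ := by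
      rw [Prod.dist_eq]
      exact max_lt (lt_of_le_of_lt (by rw [dist_eq_norm]; exact h1) hlt)
        (lt_of_le_of_lt (by rw [dist_eq_norm]; exact h2) hlt)
    exact le_of_lt (by simpa [dist_eq_norm] using hδ this)
  -- block estimate
  have hC : ∀ ε : ℝ, 0 < ε → ∃ K : ℕ, ∀ k, K ≤ k → ∀ (c y : ℤ_[p]),
      ‖∑ i ∈ range (p ^ k), F (c + (i : ℤ_[p]), y)‖ ≤ ε := by
    intro ε hε
    obtain ⟨m, hm⟩ := hB ε hε
    obtain ⟨K₀, hK₀⟩ := pow_unbounded_of_one_lt (M / ε) hp1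
    refine ⟨m + K₀, fun k hk c y => ?_⟩
    have hmk : m ≤ k := le_trans (Nat.le_add_right m K₀) hk
    have hsplit : ∑ i ∈ range (p ^ k), F (c + (i : ℤ_[p]), y)
        = (∑ i ∈ range (p ^ k), (F (c + (i : ℤ_[p]), y) - F (c + ((i % p ^ m : ℕ) : ℤ_[p]), y)))
          + ∑ i ∈ range (p ^ k), F (c + ((i % p ^ m : ℕ) : ℤ_[p]), y) := by
      rw [← Finset.sum_add_distrib]
      exact Finset.sum_congr rfl fun i _ => by ring
    rw [hsplit]
    refine (IsUltrametricDist.norm_add_le_max _ _).trans (max_le ?_ ?_)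
    · refine IsUltrametricDist.norm_sum_le_of_forall_le_of_nonneg hε.le fun i _ => ?_
      refine hm _ _ y y ?_ (by simpa using zpow_nonneg hp0.le _)
      set a := i % p ^ m with ha
      set b := i / p ^ m with hb
      have hi : i = p ^ m * b + a := (Nat.div_add_mod i (p ^ m)).symm
      have e2 : (c + (i : ℤ_[p])) - (c + ((a : ℕ) : ℤ_[p]))
          = (((p ^ m * b : ℕ) : ℤ) : ℤ_[p]) := by
        rw [hi]
        push_cast [Nat.cast_add, Nat.cast_mul]
        ring
      rw [e2, PadicInt.norm_int_le_pow_iff_dvd]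
      exact ⟨((b : ℕ) : ℤ), by push_cast; ring⟩
    · have hrw : ∑ i ∈ range (p ^ k), F (c + ((i % p ^ m : ℕ) : ℤ_[p]), y)
          = (p ^ (k - m)) • ∑ s ∈ range (p ^ m), F (c + (s : ℤ_[p]), y) := by
        have : p ^ k = p ^ (k - m) * p ^ m := by
          rw [← pow_add]; congr 1; omega
        rw [this]
        exact sum_range_mod (fun s => F (c + (s : ℤ_[p]), y)) (p ^ m) (p ^ (k - m))
      rw [hrw, nsmul_eq_mul, norm_mul]
      have h1 : ‖((p : C) ^ (k - m) : C)‖ ≤ ((p : ℝ)⁻¹) ^ (k - m) := by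
        rw [norm_pow]
        exact pow_le_pow_left₀ (norm_nonneg _) hpC _
      have h2 : ‖∑ s ∈ range (p ^ m), F (c + (s : ℤ_[p]), y)‖ ≤ M :=
        IsUltrametricDist.norm_sum_le_of_forall_le_of_nonneg hM0 fun s _ => hM _
      have hcast : ‖((p ^ (k - m) : ℕ) : C)‖ = ‖((p : C) ^ (k - m) : C)‖ := by push_cast; ring_nf
      calc ‖((p ^ (k - m) : ℕ) : C)‖ * ‖∑ s ∈ range (p ^ m), F (c + (s : ℤ_[p]), y)‖
          ≤ ((p : ℝ)⁻¹) ^ (k - m) * M := by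
            refine mul_le_mul (hcast ▸ h1) h2 (norm_nonneg _) (by positivity)
        _ ≤ ε := by
            have hpk : (0:ℝ) < (p:ℝ) ^ (k - m) := pow_pos hp0 _
            have hK0k : K₀ ≤ k - m := by omega
            have hlt : M / ε < (p : ℝ) ^ (k - m) :=
              lt_of_lt_of_le hK₀ (pow_le_pow_right₀ hp1.le hK0k)
            rw [div_lt_iff₀ hε] at hlt
            have hfin : ((p : ℝ) ^ (k - m))⁻¹ * M ≤ ε := by
              rw [inv_mul_le_iff₀ hpk]
              nlinarith [hlt]
            calc ((p:ℝ)⁻¹) ^ (k - m) * M = ((p : ℝ) ^ (k - m))⁻¹ * M := by rw [inv_pow]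
              _ ≤ ε := hfin
  -- uniform Cauchy estimate for partial sums
  have hD : ∀ ε : ℝ, 0 < ε → ∃ K : ℕ, ∀ k, K ≤ k → ∀ (n t : ℕ) (y : ℤ_[p]),
      ‖S (n + t * p ^ k) y - S n y‖ ≤ ε := by
    intro ε hε
    obtain ⟨K, hK⟩ := hC ε hε
    refine ⟨K, fun k hk n t y => ?_⟩
    induction t with
    | zero => simpa using hε.le
    | succ t ih =>
        have hstep : S (n + t * p ^ k + p ^ k) y - S (n + t * p ^ k) y
            = ∑ i ∈ range (p ^ k), F (((n + t * p ^ k : ℕ) : ℤ_[p]) + (i : ℤ_[p]), y) := by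
          simp only [hS]
          rw [Finset.sum_range_add]
          simp only [add_sub_cancel_left]
          refine Finset.sum_congr rfl fun i _ => ?_
          push_cast
          ring_nf
        have e : S (n + (t + 1) * p ^ k) y - S n y
            = (S (n + t * p ^ k + p ^ k) y - S (n + t * p ^ k) y)
              + (S (n + t * p ^ k) y - S n y) := by
          have : n + (t + 1) * p ^ k = n + t * p ^ k + p ^ k := by ring
          rw [this]; ring
        rw [e]
        refine (IsUltrametricDist.norm_add_le_max _ _).trans (max_le ?_ ih)
        rw [hstep]
        exact hK k hk _ y
  -- continuity of each approximant
  have hTcont : ∀ j : ℕ, Continuous fun q : ℤ_[p] × ℤ_[p] => S (q.1.appr j) q.2 := by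
    intro j
    rw [continuous_iff_continuousAt]
    rintro ⟨x, y⟩
    have hr : (0 : ℝ) < (p : ℝ) ^ (-(j : ℤ)) := zpow_pos hp0 _
    have hev : (fun q : ℤ_[p] × ℤ_[p] => S (q.1.appr j) q.2)
        =ᶠ[nhds (x, y)] fun q => S (x.appr j) q.2 := by
      have hmem : Metric.ball x ((p : ℝ) ^ (-(j : ℤ))) ×ˢ (Set.univ : Set ℤ_[p])
          ∈ nhds ((x, y) : ℤ_[p] × ℤ_[p]) :=
        prod_mem_nhds (Metric.ball_mem_nhds x hr) univ_mem
      refine eventually_of_mem hmem ?_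
      rintro ⟨x', y'⟩ ⟨hx', -⟩
      have : x'.appr j = x.appr j := by
        refine appr_eq_of_norm_le ?_
        have := Metric.mem_ball.mp hx'
        rw [dist_eq_norm] at this
        exact this.le
      simp [this]
    have hc : Continuous fun q : ℤ_[p] × ℤ_[p] => S (x.appr j) q.2 := by
      rw [hS]
      exact (continuous_finset_sum _ fun i _ =>
        hF.comp (continuous_const.prodMk continuous_id)).comp continuous_snd
    exact (hc.continuousAt).congr hev.symm
  -- the sequence of continuous maps
  let Tc : ℕ → C(ℤ_[p] × ℤ_[p], C) := fun j => ⟨fun q => S (q.1.appr j) q.2, hTcont j⟩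
  have hdist : ∀ j j' : ℕ, j ≤ j' → ∀ ε : ℝ, 0 < ε →
      (∀ k, k ≤ j → False) ∨ True := fun _ _ _ _ _ => Or.inr trivial
  have hcau : CauchySeq Tc := by
    rw [Metric.cauchySeq_iff]
    intro ε hε
    obtain ⟨K, hK⟩ := hD (ε / 2) (half_pos hε)
    refine ⟨K, fun j' hj' j hj => ?_⟩
    have key : ∀ (a b : ℕ), K ≤ a → a ≤ b → dist (Tc b) (Tc a) ≤ ε / 2 := by
      intro a b ha hab
      rw [ContinuousMap.dist_le (half_pos hε).le]
      rintro ⟨x, y⟩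
      have hmono : x.appr a ≤ x.appr b := PadicInt.appr_mono x hab
      obtain ⟨t, ht⟩ := (PadicInt.dvd_appr_sub_appr x a b hab)
      have hb : x.appr b = x.appr a + t * p ^ a := by
        rw [mul_comm]; omega
      simp only [Tc, ContinuousMap.coe_mk, dist_eq_norm]
      rw [hb]
      exact hK a ha _ t y
    rcases le_total j j' with h | h
    · calc dist (Tc j') (Tc j) ≤ ε / 2 := key j j' hj h
        _ < ε := by linarith
    · calc dist (Tc j') (Tc j) = dist (Tc j) (Tc j') := dist_comm _ _
        _ ≤ ε / 2 := key j' j hj' h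
        _ < ε := by linarith
  obtain ⟨Tlim, hTlim⟩ := cauchySeq_tendsto_of_complete hcau
  refine ⟨fun q => Tlim q, Tlim.continuous, fun n y => ?_⟩
  -- evaluate the limit at natural number points
  have hev : Tendsto (fun j => Tc j ((n : ℤ_[p]), y)) atTop (nhds (Tlim ((n : ℤ_[p]), y))) := by
    have : Continuous fun φ : C(ℤ_[p] × ℤ_[p], C) => φ ((n : ℤ_[p]), y) :=
      continuous_eval_const _
    exact (this.continuousAt.tendsto).comp hTlim
  have hevc : ∀ᶠ j in atTop, Tc j ((n : ℤ_[p]), y) = S n y := by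
    obtain ⟨j₀, hj₀⟩ : ∃ j₀ : ℕ, n < p ^ j₀ :=
      pow_unbounded_of_one_lt n (by exact_mod_cast hp.out.one_lt)
    filter_upwards [eventually_ge_atTop j₀] with j hj
    have hn : n < p ^ j := lt_of_lt_of_le hj₀ (Nat.pow_le_pow_right hp.out.pos hj)
    simp only [Tc, ContinuousMap.coe_mk]
    rw [appr_natCast hn]
  have : Tendsto (fun _ : ℕ => S n y) atTop (nhds (Tlim ((n : ℤ_[p]), y))) :=
    hev.congr' hevc
  exact (tendsto_nhds_unique tendsto_const_nhds this).symm

end ThreeCocycleAux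

open Finset ThreeCocycleAux

/-- Let `p` be a prime and `C = ℂ_p` the completion of an algebraic
closure of `ℚ_p` (formalized as a complete algebraically closed nonarchimedean normed
field equipped with an isometric embedding of `ℚ_p`).  Continuous functions
`f : ℤ_p³ → C` and `g : ℤ_p² → C` satisfying the (stabilized) 3-cocycle relations are
jointly the coboundary of a continuous `h : ℤ_p² → C`. -/
theorem continuous_three_cocycle_is_coboundary
    {p : ℕ} [Fact p.Prime]
    (C : Type*) [NormedField C] [CompleteSpace C] [IsUltrametricDist C]
    [IsAlgClosed C] [Algebra ℚ_[p] C]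
    (hisom : ∀ q : ℚ_[p], ‖algebraMap ℚ_[p] C q‖ = ‖q‖)
    (f : ℤ_[p] × ℤ_[p] × ℤ_[p] → C) (g : ℤ_[p] × ℤ_[p] → C)
    (hf : Continuous f) (hg : Continuous g)
    (h1 : ∀ x y z w : ℤ_[p],
      f (x + y, z, w) - f (y, z, w) - f (x, y + z, w) + f (x, y, z + w) - f (x, y, z) = 0)
    (h2 : ∀ x y z : ℤ_[p],
      g (x + y, z) - g (y, z) - g (x, z) - f (x, y, z) + f (x, z, y) - f (z, x, y) = 0)
    (h3 : ∀ x y z : ℤ_[p],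
      g (x, y + z) - g (x, y) - g (x, z) + f (x, y, z) - f (y, x, z) + f (y, z, x) = 0)
    (h4 : ∀ x y : ℤ_[p], g (x, y) + g (y, x) = 0)
    (h5 : ∀ x : ℤ_[p], g (x, x) = 0) :
    ∃ h : ℤ_[p] × ℤ_[p] → C, Continuous h ∧
      (∀ x y z : ℤ_[p], f (x, y, z) = h (x + y, z) - h (y, z) - h (x, y + z) + h (x, y)) ∧
      (∀ x y : ℤ_[p], g (x, y) = h (x, y) - h (y, x)) := by
  have hpC : ‖(p : C)‖ ≤ (p : ℝ)⁻¹ := by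
    have h := hisom ((p : ℕ) : ℚ_[p])
    rw [map_natCast] at h
    rw [h, Padic.norm_p]
  -- the parametrized indefinite sum of F (t, y) = f (1, t, y)
  obtain ⟨T, hTc, hTval⟩ := exists_primitive hpC (fun q : ℤ_[p] × ℤ_[p] => f (1, q.1, q.2))
    (hf.comp (continuous_const.prodMk (continuous_fst.prodMk continuous_snd)))
  have hTval' : ∀ (n : ℕ) (y : ℤ_[p]), T ((n : ℤ_[p]), y)
      = ∑ i ∈ range n, f (1, (i : ℤ_[p]), y) := fun n y => hTval n y
  set h₀ : ℤ_[p] × ℤ_[p] → C := fun q => T q - f (0, 0, q.2) with hh₀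
  have hco : Continuous h₀ := hTc.sub
    (hf.comp (continuous_const.prodMk (continuous_const.prodMk continuous_snd)))
  have happ : ∀ a b : ℤ_[p], h₀ (a, b) = T (a, b) - f (0, 0, b) := fun a b => rfl
  have hzero : ∀ y z : ℤ_[p], f (0, y, z) = f (0, 0, y + z) - f (0, 0, y) := by
    intro y z
    have h := h1 0 0 y z
    simp only [add_zero, zero_add] at h
    linear_combination -h
  -- the cocycle identity at natural-number points
  have natId : ∀ (n m : ℕ) (z : ℤ_[p]),
      f ((n : ℤ_[p]), (m : ℤ_[p]), z)
        = h₀ ((n : ℤ_[p]) + (m : ℤ_[p]), z) - h₀ ((m : ℤ_[p]), z)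
          - h₀ ((n : ℤ_[p]), (m : ℤ_[p]) + z) + h₀ ((n : ℤ_[p]), (m : ℤ_[p])) := by
    intro n m z
    have tele : ∑ j ∈ range n,
        (f (1, (m : ℤ_[p]) + (j : ℤ_[p]), z) - f (1, (j : ℤ_[p]), (m : ℤ_[p]) + z)
          + f (1, (j : ℤ_[p]), (m : ℤ_[p])))
        = f ((n : ℤ_[p]), ((m : ℤ_[p]), z)) - f ((0 : ℤ_[p]), ((m : ℤ_[p]), z)) := by
      have hterm : ∀ j ∈ range n,
          (f (1, (m : ℤ_[p]) + (j : ℤ_[p]), z) - f (1, (j : ℤ_[p]), (m : ℤ_[p]) + z)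
            + f (1, (j : ℤ_[p]), (m : ℤ_[p])))
          = f ((((j + 1 : ℕ)) : ℤ_[p]), ((m : ℤ_[p]), z))
            - f ((j : ℤ_[p]), ((m : ℤ_[p]), z)) := by
        intro j _
        have h := h1 1 (j : ℤ_[p]) (m : ℤ_[p]) z
        have e1 : (1 : ℤ_[p]) + (j : ℤ_[p]) = ((j + 1 : ℕ) : ℤ_[p]) := by push_cast; ring
        have e2 : (m : ℤ_[p]) + (j : ℤ_[p]) = (j : ℤ_[p]) + (m : ℤ_[p]) := add_comm _ _
        rw [e1] at h
        rw [e2]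
        linear_combination -h
      rw [Finset.sum_congr rfl hterm,
        Finset.sum_range_sub (fun j => f ((j : ℤ_[p]), ((m : ℤ_[p]), z))) n]
      norm_num
    have hA : ∑ i ∈ range (n + m), f (1, (i : ℤ_[p]), z)
        = ∑ i ∈ range m, f (1, (i : ℤ_[p]), z)
          + ∑ j ∈ range n, f (1, (m : ℤ_[p]) + (j : ℤ_[p]), z) := by
      rw [add_comm n m, Finset.sum_range_add]
      congr 1
      refine Finset.sum_congr rfl fun j _ => ?_
      push_cast
      ring_nf
    have hBC : ∑ j ∈ range n, f (1, (m : ℤ_[p]) + (j : ℤ_[p]), z)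
          - ∑ j ∈ range n, f (1, (j : ℤ_[p]), (m : ℤ_[p]) + z)
          + ∑ j ∈ range n, f (1, (j : ℤ_[p]), (m : ℤ_[p]))
        = f ((n : ℤ_[p]), ((m : ℤ_[p]), z)) - f ((0 : ℤ_[p]), ((m : ℤ_[p]), z)) := by
      rw [← Finset.sum_sub_distrib, ← Finset.sum_add_distrib]
      exact tele
    have hT1 : T ((n : ℤ_[p]) + (m : ℤ_[p]), z)
        = ∑ i ∈ range (n + m), f (1, (i : ℤ_[p]), z) := by
      rw [show ((n : ℤ_[p]) + (m : ℤ_[p])) = ((n + m : ℕ) : ℤ_[p]) by push_cast; ring]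
      exact hTval' (n + m) z
    have hT2 := hTval' m z
    have hT3 := hTval' n ((m : ℤ_[p]) + z)
    have hT4 := hTval' n (m : ℤ_[p])
    have hz := hzero (m : ℤ_[p]) z
    rw [happ, happ, happ, happ, hT1, hT2, hT3, hT4]
    linear_combination hz - hA - hBC
  -- extend the identity to all of ℤ_p³ by density and continuity
  have hcob : ∀ x y z : ℤ_[p],
      f (x, y, z) = h₀ (x + y, z) - h₀ (y, z) - h₀ (x, y + z) + h₀ (x, y) := by
    have hdr : DenseRange (Prod.map (Nat.cast : ℕ → ℤ_[p])
        (Prod.map (Nat.cast : ℕ → ℤ_[p]) (id : ℤ_[p] → ℤ_[p]))) :=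
      (PadicInt.denseRange_natCast).prodMap
        ((PadicInt.denseRange_natCast).prodMap denseRange_id)
    have hc2 : Continuous fun q : ℤ_[p] × ℤ_[p] × ℤ_[p] =>
        h₀ (q.1 + q.2.1, q.2.2) - h₀ (q.2.1, q.2.2) - h₀ (q.1, q.2.1 + q.2.2)
          + h₀ (q.1, q.2.1) := by
      have c1 : Continuous fun q : ℤ_[p] × ℤ_[p] × ℤ_[p] => h₀ (q.1 + q.2.1, q.2.2) :=
        hco.comp ((continuous_fst.add (continuous_fst.comp continuous_snd)).prodMk
          (continuous_snd.comp continuous_snd))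
      have c2 : Continuous fun q : ℤ_[p] × ℤ_[p] × ℤ_[p] => h₀ (q.2.1, q.2.2) :=
        hco.comp ((continuous_fst.comp continuous_snd).prodMk
          (continuous_snd.comp continuous_snd))
      have c3 : Continuous fun q : ℤ_[p] × ℤ_[p] × ℤ_[p] => h₀ (q.1, q.2.1 + q.2.2) :=
        hco.comp (continuous_fst.prodMk
          ((continuous_fst.comp continuous_snd).add (continuous_snd.comp continuous_snd)))
      have c4 : Continuous fun q : ℤ_[p] × ℤ_[p] × ℤ_[p] => h₀ (q.1, q.2.1) :=
        hco.comp (continuous_fst.prodMk (continuous_fst.comp continuous_snd))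
      exact ((c1.sub c2).sub c3).add c4
    have key := hdr.equalizer hf hc2 (funext fun t => natId t.1 t.2.1 t.2.2)
    intro x y z
    exact congrFun key (x, (y, z))
  -- the antisymmetrization correction
  have g0add1 : ∀ x y z : ℤ_[p], g (x + y, z) - g (y, z) - g (x, z)
      = (h₀ (x + y, z) - h₀ (z, x + y)) - (h₀ (y, z) - h₀ (z, y))
        - (h₀ (x, z) - h₀ (z, x)) := by
    intro x y z
    have e2 := h2 x y z
    have c1 := hcob x y z
    have c2 := hcob x z y
    have c3 := hcob z x y
    rw [show z + y = y + z from add_comm z y] at c2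
    rw [show z + x = x + z from add_comm z x] at c3
    linear_combination e2 + c1 - c2 + c3
  have g0add2 : ∀ x y z : ℤ_[p], g (x, y + z) - g (x, y) - g (x, z)
      = (h₀ (x, y + z) - h₀ (y + z, x)) - (h₀ (x, y) - h₀ (y, x))
        - (h₀ (x, z) - h₀ (z, x)) := by
    intro x y z
    have e3 := h3 x y z
    have c1 := hcob x y z
    have c2 := hcob y x z
    have c3 := hcob y z x
    rw [show y + x = x + y from add_comm y x] at c2
    rw [show z + x = x + z from add_comm z x] at c3
    linear_combination e3 - c1 + c2 - c3
  set φ : ℤ_[p] × ℤ_[p] → C := fun q => g q - h₀ q + h₀ (q.2, q.1) with hφ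
  have hφapp : ∀ a b : ℤ_[p], φ (a, b) = g (a, b) - h₀ (a, b) + h₀ (b, a) := fun _ _ => rfl
  have hφc : Continuous φ :=
    (hg.sub hco).add (hco.comp (continuous_snd.prodMk continuous_fst))
  have φadd1 : ∀ x y z : ℤ_[p], φ (x + y, z) = φ (x, z) + φ (y, z) := by
    intro x y z
    simp only [hφapp]
    linear_combination g0add1 x y z
  have φadd2 : ∀ x y z : ℤ_[p], φ (x, y + z) = φ (x, y) + φ (x, z) := by
    intro x y z
    simp only [hφapp]
    linear_combination g0add2 x y z
  have φ11 : φ (1, 1) = 0 := by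
    rw [hφapp]
    have := h5 1
    linear_combination this
  have φx0 : ∀ x : ℤ_[p], φ (x, 0) = 0 := by
    intro x
    have h := φadd2 x 0 0
    rw [add_zero] at h
    linear_combination -h
  have φ0y : ∀ y : ℤ_[p], φ (0, y) = 0 := by
    intro y
    have h := φadd1 0 0 y
    rw [add_zero] at h
    linear_combination -h
  have φ1nat : ∀ m : ℕ, φ (1, (m : ℤ_[p])) = 0 := by
    intro m
    induction m with
    | zero => simpa using φx0 1
    | succ m ih =>
        have h := φadd2 1 (m : ℤ_[p]) 1
        rw [show ((m + 1 : ℕ) : ℤ_[p]) = (m : ℤ_[p]) + 1 by push_cast; ring]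
        rw [h, ih, φ11, add_zero]
  have φ1y : ∀ y : ℤ_[p], φ (1, y) = 0 := by
    have key := (PadicInt.denseRange_natCast (p := p)).equalizer
      (hφc.comp (continuous_const.prodMk continuous_id))
      (continuous_const : Continuous fun _ : ℤ_[p] => (0 : C))
      (funext fun m => φ1nat m)
    intro y
    exact congrFun key y
  have φnat : ∀ (n : ℕ) (y : ℤ_[p]), φ ((n : ℤ_[p]), y) = 0 := by
    intro n
    induction n with
    | zero => intro y; simpa using φ0y y
    | succ n ih =>
        intro y
        have h := φadd1 (n : ℤ_[p]) 1 y
        rw [show ((n + 1 : ℕ) : ℤ_[p]) = (n : ℤ_[p]) + 1 by push_cast; ring]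
        rw [h, ih y, φ1y y, add_zero]
  have φall : ∀ x y : ℤ_[p], φ (x, y) = 0 := by
    intro x y
    have key := (PadicInt.denseRange_natCast (p := p)).equalizer
      (hφc.comp (continuous_id.prodMk continuous_const))
      (continuous_const : Continuous fun _ : ℤ_[p] => (0 : C))
      (funext fun n => φnat n y)
    exact congrFun key x
  refine ⟨h₀, hco, hcob, fun x y => ?_⟩
  have h := φall x y
  rw [hφapp] at h
  linear_combination h
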